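/- Let G be a graph with at least 3 vertices and let v be a vertex of G. Then st_D(G) ≤ st_D(G − v) + 1, where G − v is the induced subgraph obtained by deleting v. -/
import Mathlib


open SimpleGraph

/-- The distinguishing number of a graph: the least `d` such that there is a vertex
labeling with `d` labels preserved only by the trivial automorphism. -/
noncomputable def distNum {V : Type*} (G : SimpleGraph V) : ℕ :=
  sInf {d : ℕ | ∃ f : V → Fin d, ∀ φ : G ≃g G, (∀ x, f (φ x) = f x) → ∀ x, φ x = x}

/-- The distinguishing stability of a graph: the minimum cardinality of a proper subset
`S` of the vertex set whose removal changes the distinguishing number. -/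
noncomputable def stD {V : Type*} (G : SimpleGraph V) : ℕ :=
  sInf {k : ℕ | ∃ S : Set V, S ≠ Set.univ ∧ S.ncard = k ∧
    distNum (G.induce Sᶜ) ≠ distNum G}

/-- The distinguishing bondage number of a graph: the minimum cardinality of a set
of edges whose removal changes the distinguishing number. -/
noncomputable def bD {V : Type*} (G : SimpleGraph V) : ℕ :=
  sInf {k : ℕ | ∃ F : Set (Sym2 V), F ⊆ G.edgeSet ∧ F.ncard = k ∧
    distNum (G.deleteEdges F) ≠ distNum G}

lemma card_mem_distSet {V : Type*} [Fintype V] (G : SimpleGraph V) :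
    ∃ f : V → Fin (Fintype.card V), ∀ φ : G ≃g G, (∀ x, f (φ x) = f x) → ∀ x, φ x = x :=
  ⟨Fintype.equivFin V, fun _ h x => (Fintype.equivFin V).injective (h x)⟩

lemma iso_transfer {V W : Type*} {G : SimpleGraph V} {H : SimpleGraph W} (e : G ≃g H) {d : ℕ}
    (hd : ∃ f : V → Fin d, ∀ φ : G ≃g G, (∀ x, f (φ x) = f x) → ∀ x, φ x = x) :
    ∃ g : W → Fin d, ∀ φ : H ≃g H, (∀ x, g (φ x) = g x) → ∀ x, φ x = x := by
  obtain ⟨f, hf⟩ := hd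
  refine ⟨f ∘ e.symm, fun φ hφ w => ?_⟩
  have hψ : ∀ x, ((e.trans φ).trans e.symm) x = x := by
    refine hf ((e.trans φ).trans e.symm) (fun x => ?_)
    have := hφ (e x)
    simpa using this
  have := hψ (e.symm w)
  simp only [RelIso.trans_apply] at this
  have h2 : φ (e (e.symm w)) = e (e.symm w) := by
    have := congrArg e this
    simpa using this
  simpa using h2

lemma distNum_eq_of_iso {V W : Type*} {G : SimpleGraph V} {H : SimpleGraph W} (e : G ≃g H) :
    distNum G = distNum H := by
  unfold distNum
  congr 1
  ext d
  exact ⟨fun hd => iso_transfer e hd, fun hd => iso_transfer e.symm hd⟩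

lemma distNum_subsingleton {V : Type*} [Nonempty V] [Subsingleton V] (G : SimpleGraph V) :
    distNum G = 1 := by
  have h1 : 1 ∈ {d : ℕ | ∃ f : V → Fin d, ∀ φ : G ≃g G, (∀ x, f (φ x) = f x) → ∀ x, φ x = x} :=
    ⟨fun _ => 0, fun φ _ x => Subsingleton.elim _ _⟩
  have h0 : (0 : ℕ) ∉ {d : ℕ | ∃ f : V → Fin d, ∀ φ : G ≃g G, (∀ x, f (φ x) = f x) → ∀ x, φ x = x} := by
    rintro ⟨f, -⟩
    exact Fin.elim0 (f (Classical.arbitrary V))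
  have hle : distNum G ≤ 1 := Nat.sInf_le h1
  have hne : distNum G ≠ 0 := by
    intro h
    rcases Nat.sInf_eq_zero.mp h with h' | h'
    · exact h0 h'
    · exact Set.notMem_empty 1 (h' ▸ h1)
  omega

lemma distNum_ne_one_of_card_two {V : Type*} [Fintype V] (hc : Fintype.card V = 2)
    (G : SimpleGraph V) : distNum G ≠ 1 := by
  classical
  intro h
  have hne : {d : ℕ | ∃ f : V → Fin d, ∀ φ : G ≃g G, (∀ x, f (φ x) = f x) → ∀ x, φ x = x}.Nonempty :=
    ⟨_, card_mem_distSet G⟩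
  have hmem := Nat.sInf_mem hne
  have h' : sInf {d : ℕ | ∃ f : V → Fin d, ∀ φ : G ≃g G, (∀ x, f (φ x) = f x) → ∀ x, φ x = x} = 1 := h
  rw [h'] at hmem
  obtain ⟨f, hf⟩ := hmem
  have hc' : Nat.card V = 2 := by rw [Nat.card_eq_fintype_card]; exact hc
  obtain ⟨a, b, hab, huniv⟩ := Nat.card_eq_two_iff.mp hc'
  have key : ∀ x : V, x = a ∨ x = b := by
    intro x
    have : x ∈ ({a, b} : Set V) := by rw [huniv]; trivial
    simpa using this
  have hadj : ∀ x y : V, G.Adj (Equiv.swap a b x) (Equiv.swap a b y) ↔ G.Adj x y := by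
    intro x y
    rcases key x with rfl | rfl <;> rcases key y with rfl | rfl <;>
      simp [Equiv.swap_apply_left, Equiv.swap_apply_right, G.adj_comm]
  have := hf ⟨Equiv.swap a b, hadj _ _⟩ (fun x => Subsingleton.elim _ _) a
  simp only [RelIso.coe_fn_mk, Equiv.swap_apply_left] at this
  exact hab this.symm

lemma stDSet_nonempty {V : Type*} [Fintype V] (G : SimpleGraph V) (h2 : 2 ≤ Fintype.card V) :
    {k : ℕ | ∃ S : Set V, S ≠ Set.univ ∧ S.ncard = k ∧
      distNum (G.induce Sᶜ) ≠ distNum G}.Nonempty := by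
  classical
  obtain ⟨a, b, hab⟩ := Fintype.exists_pair_of_one_lt_card (α := V) (by omega)
  by_cases hG : distNum G = 1
  · refine ⟨(({a, b} : Set V)ᶜ).ncard, ({a, b} : Set V)ᶜ, ?_, rfl, ?_⟩
    · exact Set.ne_univ_iff_exists_notMem _ |>.mpr ⟨a, by simp⟩
    · have hc2 : Fintype.card ↥({a, b} : Set V) = 2 := by
        rw [← Nat.card_eq_fintype_card, Nat.card_coe_set_eq, Set.ncard_pair hab]
      rw [compl_compl, hG]
      exact distNum_ne_one_of_card_two hc2 _
  · refine ⟨(({a} : Set V)ᶜ).ncard, ({a} : Set V)ᶜ, ?_, rfl, ?_⟩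
    · exact Set.ne_univ_iff_exists_notMem _ |>.mpr ⟨a, by simp⟩
    · rw [compl_compl]
      haveI : Nonempty ↥({a} : Set V) := ⟨⟨a, rfl⟩⟩
      haveI : Subsingleton ↥({a} : Set V) := ⟨by
        rintro ⟨x, hx⟩ ⟨y, hy⟩
        simp only [Set.mem_singleton_iff] at hx hy
        subst hx; subst hy; rfl⟩
      rw [distNum_subsingleton]
      exact fun hh => hG hh.symm


/-- $st_D(G) \le st_D(G - v) + 1$. -/
theorem stD_le_stD_deleteVert {V : Type*} [Fintype V] (G : SimpleGraph V)
    (h : 3 ≤ Fintype.card V) (v : V) :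
    stD G ≤ stD (G.induce {x | x ≠ v}) + 1 := by
  classical
  set V₁ : Set V := {x | x ≠ v} with hV₁
  have hV₁c : V₁ = ({v} : Set V)ᶜ := by ext x; simp [hV₁]
  have h2 : 2 ≤ Fintype.card ↥V₁ := by
    rw [← Nat.card_eq_fintype_card, Nat.card_coe_set_eq, hV₁c]
    have := Set.ncard_add_ncard_compl ({v} : Set V)
    rw [Set.ncard_singleton, Nat.card_eq_fintype_card] at this
    omega
  have hT := stDSet_nonempty (G.induce V₁) h2
  obtain ⟨S', hS'ne, hS'card, hS'dist⟩ := Nat.sInf_mem hT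
  by_cases hcase : distNum (G.induce V₁) = distNum G
  · have hS : (insert v (Subtype.val '' S') : Set V) = insert v (Subtype.val '' S') := rfl
    have hvnot : v ∉ Subtype.val '' S' := by
      rintro ⟨u, -, huv⟩; exact u.2 huv
    have hncard : (insert v (Subtype.val '' S') : Set V).ncard = S'.ncard + 1 := by
      rw [Set.ncard_insert_of_notMem hvnot (Set.toFinite _),
        Set.ncard_image_of_injective _ Subtype.val_injective]
    have hSne : (insert v (Subtype.val '' S') : Set V) ≠ Set.univ := by
      obtain ⟨w, hw⟩ := Set.ne_univ_iff_exists_notMem S' |>.mp hS'ne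
      refine Set.ne_univ_iff_exists_notMem _ |>.mpr ⟨(w : V), ?_⟩
      intro hmem
      rcases Set.mem_insert_iff.mp hmem with h' | ⟨u, hu, huv⟩
      · exact w.2 h'
      · exact hw (Subtype.ext huv ▸ hu)
    have hx1 : ∀ x : ↥(insert v (Subtype.val '' S') : Set V)ᶜ, (x : V) ∈ V₁ :=
      fun x h' => x.2 (by rw [show (x : V) = v from h']; exact Set.mem_insert _ _)
    have hx2 : ∀ x : ↥(insert v (Subtype.val '' S') : Set V)ᶜ, (⟨(x : V), hx1 x⟩ : ↥V₁) ∈ S'ᶜ :=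
      fun x hmem => x.2 (Set.mem_insert_iff.mpr (Or.inr ⟨_, hmem, rfl⟩))
    have hy : ∀ y : ↥S'ᶜ, ((y : ↥V₁) : V) ∈ (insert v (Subtype.val '' S') : Set V)ᶜ := by
      intro y hmem
      rcases Set.mem_insert_iff.mp hmem with h' | ⟨u, hu, huv⟩
      · exact (y : ↥V₁).2 h'
      · exact y.2 ((Subtype.ext huv : u = (y : ↥V₁)) ▸ hu)
    have e : (G.induce (insert v (Subtype.val '' S') : Set V)ᶜ) ≃g ((G.induce V₁).induce S'ᶜ) :=
      ⟨{ toFun := fun x => ⟨⟨(x : V), hx1 x⟩, hx2 x⟩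
         invFun := fun y => ⟨((y : ↥V₁) : V), hy y⟩
         left_inv := fun x => rfl
         right_inv := fun y => rfl }, Iff.rfl⟩
    have hiso := distNum_eq_of_iso e
    have key : distNum (G.induce (insert v (Subtype.val '' S') : Set V)ᶜ) ≠ distNum G := by
      rw [hiso, ← hcase]; exact hS'dist
    have hle : stD G ≤ S'.ncard + 1 := Nat.sInf_le ⟨_, hSne, hncard, key⟩
    have hdef : stD (G.induce V₁) =
        sInf {k : ℕ | ∃ S : Set ↥V₁, S ≠ Set.univ ∧ S.ncard = k ∧
          distNum ((G.induce V₁).induce Sᶜ) ≠ distNum (G.induce V₁)} := rfl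
    omega
  · obtain ⟨w, hw⟩ := Fintype.exists_ne_of_one_lt_card (by omega) v
    have hle : stD G ≤ 1 := by
      refine Nat.sInf_le ⟨{v}, ?_, Set.ncard_singleton v, ?_⟩
      · exact Set.ne_univ_iff_exists_notMem _ |>.mpr ⟨w, by simp [hw]⟩
      · rw [← hV₁c]; exact hcase
    omega
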